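/- For j ∈ ℤ≥0, let ψⱼ(t) = √2·e^{−t}·Λⱼ(2t) for t > 0 and ψⱼ(t) = 0 for t < 0, where Λⱼ is the j-th normalized Laguerre polynomial. Then the Fourier transform of ψⱼ is (Fψⱼ)(λ) = ((λ−i)/(λ+i))ʲ · i√2/(λ+i), where (Ff)(λ) = ∫₀^∞ f(t)e^{iλt} dt. -/

import Mathlib

open MeasureTheory Complex

/-- The `n`-th Laguerre polynomial `Λₙ(x) = Σ_{k=0}^{n} (-1)^k C(n,k) x^k / k!`
(normalized so that the functions `√2·e^{-t}Λₙ(2t)` are orthonormal in `L²(0,∞)`). -/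
noncomputable def laguerre (n : ℕ) (x : ℝ) : ℝ :=
  ∑ k ∈ Finset.range (n + 1), (-1 : ℝ) ^ k * (n.choose k) * x ^ k / (k.factorial)

/-- The Laguerre function `ψₙ(t) = √2 e^{-t} Λₙ(2t)` for `t > 0`, `0` otherwise. -/
noncomputable def psi (n : ℕ) (t : ℝ) : ℝ :=
  if 0 < t then Real.sqrt 2 * Real.exp (-t) * laguerre n (2 * t) else 0

section Aux
open Filter Set


lemma tendsto_pow_mul_exp_neg_mul (m : ℕ) {b : ℝ} (hb : 0 < b) :
    Tendsto (fun t : ℝ => t ^ m * Real.exp (-b * t)) atTop (nhds 0) := by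
  have h := (Real.tendsto_pow_mul_exp_neg_atTop_nhds_zero m).comp
    (tendsto_id.const_mul_atTop hb)
  have := h.const_mul (1 / b ^ m)
  rw [mul_zero] at this
  refine this.congr' ?_
  filter_upwards [eventually_gt_atTop 0] with t ht
  simp only [Function.comp]
  rw [mul_pow]
  field_simp
  simp only [id]

lemma tendsto_cpow_mul_cexp {c : ℂ} (hc : 0 < c.re) (m : ℕ) :
    Tendsto (fun t : ℝ => (t : ℂ) ^ m * Complex.exp (-c * t)) atTop (nhds 0) := by
  rw [tendsto_zero_iff_norm_tendsto_zero]
  refine (tendsto_pow_mul_exp_neg_mul m hc).congr' ?_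
  filter_upwards [eventually_ge_atTop 0] with t ht
  rw [norm_mul, Complex.norm_exp]
  simp [_root_.abs_of_nonneg ht, abs_pow]

lemma integrableOn_pow_mul_cexp {c : ℂ} (hc : 0 < c.re) (m : ℕ) :
    IntegrableOn (fun t : ℝ => (t : ℂ) ^ m * Complex.exp (-c * t)) (Set.Ioi 0) := by
  have hreal : IntegrableOn (fun t : ℝ => t ^ (m : ℝ) * Real.exp (-c.re * t ^ (1 : ℝ)))
      (Set.Ioi 0) := integrableOn_rpow_mul_exp_neg_mul_rpow
    (lt_of_lt_of_le neg_one_lt_zero (Nat.cast_nonneg m)) zero_lt_one hc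
  refine Integrable.mono' hreal ?_ ?_
  · exact (Complex.continuous_ofReal.pow m).aestronglyMeasurable.mul
      (Complex.continuous_exp.comp (continuous_const.mul Complex.continuous_ofReal)).aestronglyMeasurable
  · rw [ae_restrict_iff' measurableSet_Ioi]
    filter_upwards with t ht
    rw [norm_mul, Complex.norm_exp]
    simp only [Real.rpow_one]
    rw [Real.rpow_natCast]
    have : ‖(t:ℂ)‖ = |t| := (Complex.norm_real t).trans (Real.norm_eq_abs t)
    rw [norm_pow, this, abs_of_pos ht]
    simp [mul_comm]

lemma integral_pow_mul_cexp {c : ℂ} (hc : 0 < c.re) (m : ℕ) :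
    ∫ t in Set.Ioi (0:ℝ), (t : ℂ) ^ m * Complex.exp (-c * t)
      = (m.factorial : ℂ) / c ^ (m + 1) := by
  have hc0 : c ≠ 0 := fun h => by simp [h] at hc
  have hderiv_exp : ∀ t : ℝ, HasDerivAt (fun s : ℝ => Complex.exp (-c * s))
      (-c * Complex.exp (-c * t)) t := by
    intro t
    have := (((hasDerivAt_id ((t:ℝ):ℂ)).const_mul (-c)).cexp).comp_ofReal
    simpa [mul_comm] using this
  induction m with
  | zero =>
    have key := integral_Ioi_of_hasDerivAt_of_tendsto'
      (f := fun t : ℝ => -Complex.exp (-c * t) / c)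
      (f' := fun t : ℝ => Complex.exp (-c * t)) (a := 0)
      (fun t _ => by
        have := ((hderiv_exp t).neg).div_const c
        have h2 : -(-c * Complex.exp (-c * t)) / c = Complex.exp (-c * t) := by
          field_simp
        rwa [h2] at this)
      (by simpa using integrableOn_pow_mul_cexp hc 0)
      (by
        have := (tendsto_cpow_mul_cexp hc 0).neg.div_const c
        simpa using this)
    simp only [pow_zero, one_mul, Nat.factorial_zero, Nat.cast_one, pow_one]
    simp only [Complex.ofReal_zero, mul_zero, Complex.exp_zero, zero_sub, neg_div, neg_neg] at key
    rw [key]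
    simp [one_div]
  | succ m ih =>
    have key := integral_Ioi_of_hasDerivAt_of_tendsto'
      (f := fun t : ℝ => -(t : ℂ) ^ (m+1) * Complex.exp (-c * t) / c)
      (f' := fun t : ℝ => (t : ℂ) ^ (m+1) * Complex.exp (-c * t)
        - ((m : ℂ) + 1) / c * ((t : ℂ) ^ m * Complex.exp (-c * t))) (a := 0)
      (fun t _ => by
        have hp : HasDerivAt (fun s : ℝ => (s : ℂ) ^ (m+1))
            (((m+1 : ℕ) : ℂ) * (t : ℂ) ^ m) t := by
          simpa using (hasDerivAt_pow (m+1) ((t:ℝ):ℂ)).comp_ofReal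
        have := ((hp.neg.mul (hderiv_exp t))).div_const c
        refine this.congr_deriv ?_
        simp only [Pi.neg_apply]
        push_cast
        field_simp
        ring)
      (((integrableOn_pow_mul_cexp hc (m+1))).sub
        ((integrableOn_pow_mul_cexp hc m).const_mul _))
      (by
        have := (tendsto_cpow_mul_cexp hc (m+1)).neg.div_const c
        simpa using this)
    rw [integral_sub (integrableOn_pow_mul_cexp hc (m+1))
      ((integrableOn_pow_mul_cexp hc m).const_mul _), integral_const_mul, ih] at key
    simp only [Complex.ofReal_zero, zero_pow (Nat.succ_ne_zero m), neg_zero, zero_mul,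
      zero_div, sub_zero] at key
    rw [sub_eq_zero] at key
    rw [key, div_mul_div_comm, Nat.factorial_succ, ← pow_succ']
    push_cast
    ring

end Aux

/-- The Fourier transform of the Laguerre function `ψⱼ` is
`(Fψⱼ)(λ) = ((λ-i)/(λ+i))ʲ · i√2/(λ+i)`, where `(Ff)(λ) = ∫₀^∞ f(t)e^{iλt}dt`. -/
theorem stmt6 (j : ℕ) (l : ℝ) :
    ∫ t in Set.Ioi (0 : ℝ), (psi j t : ℂ) * Complex.exp (Complex.I * l * t) =
      (((l : ℂ) - Complex.I) / ((l : ℂ) + Complex.I)) ^ j *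
        (Complex.I * (Real.sqrt 2 : ℂ)) / ((l : ℂ) + Complex.I) := by
  set c : ℂ := 1 - Complex.I * l with hc_def
  have hcre : 0 < c.re := by simp [hc_def]
  have hc0 : c ≠ 0 := fun h => by rw [h] at hcre; simp at hcre
  have hl : (l : ℂ) + Complex.I ≠ 0 := by
    intro h
    have := congrArg Complex.im h
    simp at this
  have hstep : ∀ t ∈ Set.Ioi (0:ℝ),
      (psi j t : ℂ) * Complex.exp (Complex.I * l * t)
        = ∑ k ∈ Finset.range (j+1),
            ((Real.sqrt 2 : ℂ) * ((-1:ℂ)^k * (j.choose k : ℂ) * 2^k / (k.factorial : ℂ)))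
              * ((t:ℂ)^k * Complex.exp (-c * t)) := by
    intro t ht
    have hexp : (Real.exp (-t) : ℂ) * Complex.exp (Complex.I * l * t)
        = Complex.exp (-c * t) := by
      rw [Complex.ofReal_exp, ← Complex.exp_add]
      congr 1
      rw [hc_def]
      push_cast
      ring
    rw [psi, if_pos (Set.mem_Ioi.mp ht), laguerre]
    push_cast
    simp only [Finset.mul_sum, Finset.sum_mul]
    refine Finset.sum_congr rfl fun k _ => ?_
    rw [← hexp]
    push_cast
    ring
  rw [setIntegral_congr_fun measurableSet_Ioi hstep]
  rw [integral_finset_sum _ (fun k _ => ((integrableOn_pow_mul_cexp hcre k).const_mul _))]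
  simp_rw [integral_const_mul, integral_pow_mul_cexp hcre]
  have hterm : ∀ k ∈ Finset.range (j+1),
      ((Real.sqrt 2 : ℂ) * ((-1:ℂ)^k * (j.choose k : ℂ) * 2^k / (k.factorial : ℂ)))
          * ((k.factorial : ℂ) / c ^ (k+1))
        = ((Real.sqrt 2 : ℂ) / c) * ((j.choose k : ℂ) * (-2/c)^k) := by
    intro k _
    have hfac : (k.factorial : ℂ) ≠ 0 := Nat.cast_ne_zero.2 k.factorial_ne_zero
    rw [show ((-2 : ℂ)/c)^k = ((-1:ℂ)^k * 2^k) / c^k by rw [div_pow, neg_pow]]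
    field_simp
    ring
  rw [Finset.sum_congr rfl hterm, ← Finset.mul_sum]
  have hbin : ∑ k ∈ Finset.range (j+1), (j.choose k : ℂ) * (-2/c)^k
      = (1 + (-2/c))^j := by
    rw [add_comm (1:ℂ), add_pow]
    exact Finset.sum_congr rfl fun k _ => by rw [one_pow, mul_one, mul_comm]
  rw [hbin]
  have h1 : c = -Complex.I * ((l:ℂ) + Complex.I) := by
    rw [hc_def]; linear_combination Complex.I_mul_I
  have h2 : c - 2 = -Complex.I * ((l:ℂ) - Complex.I) := by
    rw [hc_def]; linear_combination (-1 : ℂ) * Complex.I_mul_I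
  have h3 : 1 + (-2/c) = ((l:ℂ) - Complex.I)/((l:ℂ) + Complex.I) := by
    have h' : 1 + (-2/c) = (c - 2)/c := by field_simp; ring
    rw [h', h2, h1, mul_div_mul_left _ _ (neg_ne_zero.mpr Complex.I_ne_zero)]
  have h4 : (Real.sqrt 2 : ℂ)/c = Complex.I * (Real.sqrt 2 : ℂ)/((l:ℂ) + Complex.I) := by
    rw [h1, div_eq_div_iff (by rw [← h1]; exact hc0) hl]
    linear_combination ((Real.sqrt 2 : ℂ) * ((l:ℂ) + Complex.I)) * Complex.I_mul_I
  rw [h3, h4]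
  ring
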